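/- Let ε be tree-like, explained by (T,λ), and let m ∈ M. Then on each path of T corresponding to an edge of the restriction T|X_m at most one label from M occurs (so the restricted labeling λ|X_m is well-defined), the tree (T|X_m, λ|X_m) explains the restriction of ε to pairs of distinct elements of X_m, and consequently G_m = (X_m, E_m) is a simple Fitch graph. -/

import Mathlib

namespace GenFitch

/-- A rooted tree with leaf set `X`: a finite tree (acyclic connected simple
graph) with a distinguished root and an injective embedding of `X` onto the
set of vertices of degree at most one (the leaves). -/
structure RootedTree (X : Type) where
  V : Type
  fintypeV : Fintype V
  G : SimpleGraph V
  isTree : G.IsTree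
  root : V
  leaf : X → V
  leaf_inj : Function.Injective leaf
  leaf_iff : ∀ v : V, (∃ x : X, leaf x = v) ↔ (G.neighborSet v).ncard ≤ 1

namespace RootedTree

variable {X : Type}

/-- Degree of a vertex. -/
noncomputable def deg (T : RootedTree X) (v : T.V) : ℕ := (T.G.neighborSet v).ncard

/-- `v` is a leaf. -/
def IsLeaf (T : RootedTree X) (v : T.V) : Prop := ∃ x : X, T.leaf x = v

/-- `T` is phylogenetic: the root is an inner vertex of degree at least 2 and
every other inner vertex has degree at least 3. -/
def Phylo (T : RootedTree X) : Prop :=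
  ¬ T.IsLeaf T.root ∧ 2 ≤ T.deg T.root ∧
    ∀ v : T.V, ¬ T.IsLeaf v → v ≠ T.root → 3 ≤ T.deg v

/-- `T` is binary: the root has degree exactly 2 and every other inner vertex
has degree exactly 3. -/
def Binary (T : RootedTree X) : Prop :=
  T.deg T.root = 2 ∧ ∀ v : T.V, ¬ T.IsLeaf v → v ≠ T.root → T.deg v = 3

/-- `u` is an ancestor of `v` (written `u ⪰_T v`): `u` lies on the (unique)
path from the root to `v`. -/
def Anc (T : RootedTree X) (u v : T.V) : Prop :=
  ∀ p : T.G.Walk T.root v, p.IsPath → u ∈ p.support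

/-- `l` is the least common ancestor of the set of vertices `S`. -/
def IsLcaSet (T : RootedTree X) (l : T.V) (S : Set T.V) : Prop :=
  (∀ v ∈ S, T.Anc l v) ∧ ∀ u : T.V, (∀ v ∈ S, T.Anc u v) → T.Anc u l

/-- `T` displays the rooted triple `xy|z`, i.e. `lca(x,y) ≺ lca(x,y,z)`. -/
def Displays (T : RootedTree X) (x y z : X) : Prop :=
  ∃ l₂ l₃ : T.V, T.IsLcaSet l₂ {T.leaf x, T.leaf y} ∧
    T.IsLcaSet l₃ {T.leaf x, T.leaf y, T.leaf z} ∧ T.Anc l₃ l₂ ∧ l₂ ≠ l₃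

end RootedTree

/-- Some edge on the (unique) path from `lca(x,y)` to `y` carries the label
`m`.  Labels are drawn from `Option L`, with `none` playing the role of `⊗`. -/
def PathHasLabel {X L : Type} (T : RootedTree X) (lam : Sym2 T.V → Option L)
    (x y : X) (m : L) : Prop :=
  ∃ l : T.V, T.IsLcaSet l {T.leaf x, T.leaf y} ∧
    ∃ p : T.G.Walk l (T.leaf y), p.IsPath ∧ ∃ e ∈ p.edges, lam e = some m

/-- The edge-labeled tree `(T,lam)` explains the map `eps`:
for all distinct `x y`, `eps x y = some m` iff some edge on the path from
`lca(x,y)` to `y` has label `m`, and `eps x y = none` (i.e. `⊗`) iff no edge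
on that path carries a label in `L`. -/
def Explains {X L : Type} (T : RootedTree X) (lam : Sym2 T.V → Option L)
    (eps : X → X → Option L) : Prop :=
  ∀ x y : X, x ≠ y →
    ((∀ m : L, eps x y = some m ↔ PathHasLabel T lam x y m) ∧
     (eps x y = none ↔ ∀ m : L, ¬ PathHasLabel T lam x y m))

/-- `eps` is tree-like: some edge-labeled phylogenetic tree explains it. -/
def TreeLike {X L : Type} (eps : X → X → Option L) : Prop :=
  ∃ (T : RootedTree X) (lam : Sym2 T.V → Option L), T.Phylo ∧ Explains T lam eps

/-- The set `X_s` for a symbol `s ∈ M ∪ {⊗}` (encoded as `s : Option M`):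
those `x` having an in-arc labeled `s` and all other in-arcs labeled `⊗` or `s`. -/
def Xset {X M : Type} (eps : X → X → Option M) (s : Option M) : Set X :=
  {x : X | ∃ z : X, z ≠ x ∧ eps z x = s ∧
    ∀ z' : X, z' ≠ z → z' ≠ x → (eps z' x = none ∨ eps z' x = s)}

/-- The sets `X_s`, `s ∈ M ∪ {⊗}`, form a quasi-partition of `X`: pairwise
disjoint, union `X`, and at most one of them empty. -/
def QuasiPartition {X M : Type} (eps : X → X → Option M) : Prop :=
  (∀ s t : Option M, s ≠ t → Disjoint (Xset eps s) (Xset eps t)) ∧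
  (⋃ s : Option M, Xset eps s) = Set.univ ∧
  {s : Option M | Xset eps s = ∅}.Subsingleton

/-- A digraph `(Y, A)` is a simple Fitch graph: it is explained by a
`{1,⊗}`-edge-labeled phylogenetic tree on `Y` (a digraph on at most one
vertex is trivially explained by the trivial tree). -/
def IsFitchGraph (Y : Type) (A : Y → Y → Prop) : Prop :=
  Subsingleton Y ∨
  ∃ (T : RootedTree Y) (lam : Sym2 T.V → Option Unit), T.Phylo ∧
    ∀ x y : Y, x ≠ y → (A x y ↔ PathHasLabel T lam x y Unit.unit)

/-- `T'` is obtained from `T` by contracting (the fibers of) `φ`; equivalently,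
`T` refines `T'`. -/
structure IsContractionMap {X : Type} (T T' : RootedTree X) (φ : T.V → T'.V) :
    Prop where
  surj : Function.Surjective φ
  root_map : φ T.root = T'.root
  leaf_map : ∀ x : X, φ (T.leaf x) = T'.leaf x
  adj_map : ∀ a b : T.V, T.G.Adj a b → φ a = φ b ∨ T'.G.Adj (φ a) (φ b)
  adj_lift : ∀ u v : T'.V, T'.G.Adj u v →
    ∃ a b : T.V, T.G.Adj a b ∧ φ a = u ∧ φ b = v
  fiber_conn : ∀ u : T'.V, (T.G.induce {a : T.V | φ a = u}).Connected

/-- `(T,lam)` is a least-resolved tree explaining `eps`: it explains `eps` and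
no tree obtained from `T` by contracting one or more edges admits an
edge-labeling explaining `eps`. -/
def LeastResolved {X M : Type} (eps : X → X → Option M) (T : RootedTree X)
    (lam : Sym2 T.V → Option M) : Prop :=
  T.Phylo ∧ Explains T lam eps ∧
    ∀ (T' : RootedTree X) (φ : T.V → T'.V) (lam' : Sym2 T'.V → Option M),
      IsContractionMap T T' φ → ¬ Function.Injective φ → T'.Phylo →
        ¬ Explains T' lam' eps

/-- The rooted triple `xy|z` is informative for `eps`. -/
def Informative {X M : Type} (eps : X → X → Option M) (x y z : X) : Prop :=
  x ≠ y ∧ x ≠ z ∧ y ≠ z ∧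
  ∃ m : M, eps z x = some m ∧ eps z y = some m ∧ eps x z = eps y z ∧
    (eps x y = none ∨ eps x y = some m) ∧
    (eps y x = none ∨ eps y x = some m) ∧
    (eps x y = none ∨ eps y x = none)

/-- `T'` (a rooted tree on `Y`, with `incl : Y → X` and vertex embedding `ι`)
is the restriction `T|Y` of `T` to the leaf set `Y`: leaves map to leaves,
the ancestor relation is preserved and reflected, the vertices of `T'`
correspond exactly to the least common ancestors of pairs of `Y`-leaves in
`T`, and the root of `T'` corresponds to the least common ancestor of all
`Y`-leaves. -/
structure IsRestriction {X Y : Type} (T : RootedTree X) (incl : Y → X)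
    (T' : RootedTree Y) (ι : T'.V → T.V) : Prop where
  inj : Function.Injective ι
  leaf_map : ∀ y : Y, ι (T'.leaf y) = T.leaf (incl y)
  anc_iff : ∀ a b : T'.V, T'.Anc a b ↔ T.Anc (ι a) (ι b)
  image : ∀ v : T.V, (∃ a : T'.V, ι a = v) ↔
      ∃ y z : Y, T.IsLcaSet v {T.leaf (incl y), T.leaf (incl z)}
  root_map : T.IsLcaSet (ι T'.root) {v : T.V | ∃ y : Y, v = T.leaf (incl y)}

open SimpleGraph

namespace RootedTree

variable {X : Type}

attribute [local instance] RootedTree.fintypeV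

noncomputable local instance (T : RootedTree X) : DecidableEq T.V := Classical.decEq _

section Basic

variable (T : RootedTree X)

/-- The unique path between two vertices. -/
noncomputable def thePath (u v : T.V) : T.G.Walk u v :=
  (T.isTree.existsUnique_path u v).choose

lemma thePath_isPath (u v : T.V) : (T.thePath u v).IsPath :=
  (T.isTree.existsUnique_path u v).choose_spec.1

variable {T}

lemma thePath_eq {u v : T.V} (p : T.G.Walk u v) (hp : p.IsPath) : p = T.thePath u v :=
  (T.isTree.existsUnique_path u v).unique hp (T.thePath_isPath u v)

@[simp] lemma thePath_self (u : T.V) : T.thePath u u = Walk.nil :=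
  (thePath_eq Walk.nil (Walk.IsPath.nil)).symm

lemma anc_iff {u v : T.V} : T.Anc u v ↔ u ∈ (T.thePath T.root v).support := by
  constructor
  · intro h; exact h _ (T.thePath_isPath _ _)
  · intro h p hp
    rw [thePath_eq p hp]; exact h

lemma anc_refl (v : T.V) : T.Anc v v := fun p _ => p.end_mem_support

lemma anc_root (v : T.V) : T.Anc T.root v := fun p _ => p.start_mem_support

lemma takeUntil_eq {u v w : T.V} {p : T.G.Walk u v} (hp : p.IsPath) (h : w ∈ p.support) :
    p.takeUntil w h = T.thePath u w := thePath_eq _ (hp.takeUntil h)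

lemma dropUntil_eq {u v w : T.V} {p : T.G.Walk u v} (hp : p.IsPath) (h : w ∈ p.support) :
    p.dropUntil w h = T.thePath w v := thePath_eq _ (hp.dropUntil h)

lemma thePath_split {u v w : T.V} (h : w ∈ (T.thePath u v).support) :
    T.thePath u v = (T.thePath u w).append (T.thePath w v) := by
  conv_lhs => rw [← Walk.take_spec _ h]
  rw [takeUntil_eq (T.thePath_isPath u v) h, dropUntil_eq (T.thePath_isPath u v) h]

lemma anc_split {u v : T.V} (h : T.Anc u v) :
    T.thePath T.root v = (T.thePath T.root u).append (T.thePath u v) :=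
  thePath_split (anc_iff.mp h)

variable (T) in
/-- Depth of a vertex. -/
noncomputable def depth (v : T.V) : ℕ := (T.thePath T.root v).length

lemma depth_eq_of_anc {u v : T.V} (h : T.Anc u v) :
    T.depth v = T.depth u + (T.thePath u v).length := by
  rw [depth, anc_split h, Walk.length_append]; rfl

lemma anc_antisymm {u v : T.V} (h1 : T.Anc u v) (h2 : T.Anc v u) : u = v := by
  have e1 := depth_eq_of_anc h1
  have e2 := depth_eq_of_anc h2
  have : (T.thePath u v).length = 0 := by omega
  exact Walk.eq_of_length_eq_zero this

lemma depth_le_of_anc {u v : T.V} (h : T.Anc u v) : T.depth u ≤ T.depth v := by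
  have := depth_eq_of_anc h; omega

lemma depth_lt_of_anc {u v : T.V} (h : T.Anc u v) (hne : u ≠ v) : T.depth u < T.depth v := by
  have e := depth_eq_of_anc h
  rcases Nat.eq_zero_or_pos (T.thePath u v).length with h0 | h0
  · exact absurd (Walk.eq_of_length_eq_zero h0) hne
  · omega

lemma anc_trans {u v w : T.V} (h1 : T.Anc u v) (h2 : T.Anc w u) : T.Anc w v := by
  rw [anc_iff] at h2 ⊢
  rw [anc_split h1, Walk.mem_support_append_iff]
  exact Or.inl h2

lemma isPath_append {u v w : T.V} {p : T.G.Walk u v} {q : T.G.Walk v w}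
    (hp : p.IsPath) (hq : q.IsPath) (hdisj : ∀ x, x ∈ p.support → x ∈ q.support → x = v) :
    (p.append q).IsPath := by
  rw [Walk.isPath_def, Walk.support_append, List.nodup_append]
  refine ⟨hp.support_nodup, hq.support_nodup.tail, ?_⟩
  intro x hxp y hxq hxy
  subst hxy
  have hvq : v ∉ q.support.tail := by
    have := hq.support_nodup
    rw [q.support_eq_cons] at this
    exact (List.nodup_cons.mp this).1
  have : x ∈ q.support := by
    rw [q.support_eq_cons]; exact List.mem_cons_of_mem _ hxq
  exact hvq (hdisj x hxp this ▸ hxq)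

lemma support_inter_of_isPath_append {u v w : T.V} {p : T.G.Walk u v} {q : T.G.Walk v w}
    (h : (p.append q).IsPath) : ∀ x, x ∈ p.support → x ∈ q.support → x = v := by
  intro x hxp hxq
  rw [Walk.isPath_def, Walk.support_append, List.nodup_append] at h
  by_contra hne
  have hxq' : x ∈ q.support.tail := by
    rw [q.support_eq_cons] at hxq
    rcases List.mem_cons.mp hxq with h1 | h1
    · exact absurd h1 hne
    · exact h1
  exact h.2.2 x hxp x hxq' rfl

lemma anc_of_mem_path {u v w : T.V} (huv : T.Anc u v) (h : w ∈ (T.thePath u v).support) :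
    T.Anc w v ∧ T.Anc u w := by
  have hsplit := anc_split huv
  constructor
  · rw [anc_iff, hsplit, Walk.mem_support_append_iff]
    exact Or.inr h
  · -- build a path root → w through u
    have hq : ((T.thePath u v).takeUntil w h).IsPath := (T.thePath_isPath u v).takeUntil h
    have hpath : ((T.thePath T.root u).append ((T.thePath u v).takeUntil w h)).IsPath := by
      apply isPath_append (T.thePath_isPath _ _) hq
      intro x hx1 hx2
      have hx2' : x ∈ (T.thePath u v).support := Walk.support_takeUntil_subset _ h hx2
      have : ((T.thePath T.root u).append (T.thePath u v)).IsPath := by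
        rw [← hsplit]; exact T.thePath_isPath _ _
      exact support_inter_of_isPath_append this x hx1 hx2'
    intro p hp
    rw [thePath_eq p hp, ← thePath_eq _ hpath, Walk.mem_support_append_iff]
    exact Or.inl (T.thePath T.root u).end_mem_support

lemma anc_comparable {u v w : T.V} (h1 : T.Anc u w) (h2 : T.Anc v w) :
    T.Anc u v ∨ T.Anc v u := by
  have hu : u ∈ (T.thePath T.root w).support := anc_iff.mp h1
  rw [anc_split h2, Walk.mem_support_append_iff] at hu
  rcases hu with hu | hu
  · exact Or.inl (anc_iff.mpr hu)
  · exact Or.inr (anc_of_mem_path h2 hu).2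

end Basic

end RootedTree
namespace RootedTree

variable {X : Type} {T : RootedTree X}

attribute [local instance] RootedTree.fintypeV

section Lca

/-- A least common ancestor of a nonempty set exists. -/
lemma exists_isLcaSet (T : RootedTree X) {S : Set T.V} (hS : S.Nonempty) :
    ∃ l, T.IsLcaSet l S := by
  classical
  have hne : (Finset.univ.filter (fun w : T.V => ∀ v ∈ S, T.Anc w v)).Nonempty :=
    ⟨T.root, by simp [anc_root]⟩
  obtain ⟨l, hl, hmax⟩ := Finset.exists_max_image _ T.depth hne
  rw [Finset.mem_filter] at hl
  refine ⟨l, hl.2, ?_⟩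
  intro u hu
  obtain ⟨v₀, hv₀⟩ := hS
  rcases anc_comparable (hu v₀ hv₀) (hl.2 v₀ hv₀) with h | h
  · exact h
  · have h1 : T.depth u ≤ T.depth l := hmax u (Finset.mem_filter.mpr ⟨Finset.mem_univ u, hu⟩)
    have h2 : T.depth l ≤ T.depth u := depth_le_of_anc h
    have : l = u := by
      by_contra hne2
      exact absurd (depth_lt_of_anc h hne2) (by omega)
    exact this ▸ anc_refl l

lemma isLcaSet_unique {l l' : T.V} {S : Set T.V} (h1 : T.IsLcaSet l S)
    (h2 : T.IsLcaSet l' S) : l = l' :=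
  anc_antisymm (h2.2 l h1.1) (h1.2 l' h2.1)

lemma isLcaSet_singleton (v : T.V) : T.IsLcaSet v {v} := by
  refine ⟨fun w hw => by rw [Set.mem_singleton_iff] at hw; exact hw ▸ anc_refl v, ?_⟩
  intro u hu
  exact hu v rfl

lemma isLcaSet_pair_anc_left {l a b : T.V} (h : T.IsLcaSet l {a, b}) : T.Anc l a :=
  h.1 a (by simp)

lemma isLcaSet_pair_anc_right {l a b : T.V} (h : T.IsLcaSet l {a, b}) : T.Anc l b :=
  h.1 b (by simp)

end Lca

section Leaf

/-- An interior vertex of a path has two distinct neighbors. -/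
lemma two_neighbors_of_interior {u v w : T.V} (p : T.G.Walk u v) (hp : p.IsPath)
    (hw : w ∈ p.support) (hu : w ≠ u) (hv : w ≠ v) :
    ∃ y z : T.V, y ≠ z ∧ T.G.Adj w y ∧ T.G.Adj w z := by
  induction p with
  | nil => simp at hw; exact absurd hw hu
  | @cons a c b h q ih =>
    rw [Walk.support_cons, List.mem_cons] at hw
    rcases hw with rfl | hw
    · exact absurd rfl hu
    · rw [Walk.cons_isPath_iff] at hp
      obtain ⟨hq, haq⟩ := hp
      by_cases hwc : w = c
      · subst hwc
        -- neighbors: a and the second vertex of q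
        cases q with
        | nil => exact absurd rfl hv
        | @cons _ d _ h' q' =>
          refine ⟨a, d, ?_, h.symm, h'⟩
          intro had
          apply haq
          rw [Walk.support_cons, had]
          exact List.mem_cons_of_mem _ q'.start_mem_support
      · exact ih hq hw hwc hv

end Leaf

end RootedTree
namespace RootedTree

variable {X : Type} {T : RootedTree X}

attribute [local instance] RootedTree.fintypeV

lemma append_left_cancel {u v w : T.V} {p : T.G.Walk u v} {q r : T.G.Walk v w}
    (h : p.append q = p.append r) : q = r := by
  induction p with
  | nil => simpa using h
  | cons h' p' ih =>
    apply ih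
    rw [Walk.cons_append, Walk.cons_append] at h
    injection h

lemma thePath_concat_of_anc {u v w : T.V} (h1 : T.Anc u v) (h2 : T.Anc v w) :
    T.thePath u w = (T.thePath u v).append (T.thePath v w) := by
  have huw : T.Anc u w := anc_trans h2 h1
  have e1 := anc_split huw
  have e2 := anc_split h2
  rw [anc_split h1, ← Walk.append_assoc] at e2
  rw [e2] at e1
  exact (append_left_cancel e1).symm

/-- A leaf has no proper descendants (assuming the root is not a leaf). -/
lemma anc_leaf_eq (hroot : ¬ T.IsLeaf T.root) {x : X} {v : T.V}
    (h : T.Anc (T.leaf x) v) : v = T.leaf x := by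
  by_contra hne
  have hlr : T.leaf x ≠ T.root := fun hl => hroot ⟨x, hl⟩
  have hmem : T.leaf x ∈ (T.thePath T.root v).support := anc_iff.mp h
  obtain ⟨y, z, hyz, hy, hz⟩ :=
    two_neighbors_of_interior _ (T.thePath_isPath T.root v) hmem hlr (Ne.symm hne)
  have hle : (T.G.neighborSet (T.leaf x)).ncard ≤ 1 := (T.leaf_iff _).mp ⟨x, rfl⟩
  have : 1 < (T.G.neighborSet (T.leaf x)).ncard := by
    rw [Set.one_lt_ncard ((T.G.neighborSet (T.leaf x)).toFinite)]
    exact ⟨y, hy, z, hz, hyz⟩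
  omega

section Step

variable (T)

/-- The second vertex on the path from `u` to `v`. -/
noncomputable def step (u v : T.V) : T.V := (T.thePath u v).getVert 1

variable {T}

lemma length_thePath_pos {u v : T.V} (hne : u ≠ v) : 0 < (T.thePath u v).length := by
  rw [← Walk.not_nil_iff_lt_length]
  exact Walk.not_nil_of_ne hne

lemma adj_step {u v : T.V} (hne : u ≠ v) : T.G.Adj u (T.step u v) := by
  have h := (T.thePath u v).adj_getVert_succ (length_thePath_pos hne)
  rwa [Walk.getVert_zero] at h

lemma step_ne {u v : T.V} (hne : u ≠ v) : T.step u v ≠ u := (adj_step hne).ne'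

lemma step_mem_support {u v : T.V} : T.step u v ∈ (T.thePath u v).support := by
  rw [Walk.mem_support_iff_exists_getVert]
  by_cases hne : u = v
  · subst hne
    have hs : T.step u u = u := by
      rw [step, thePath_self]
      exact Walk.getVert_of_length_le _ (by simp)
    rw [hs]
    exact ⟨0, by simp, by simp⟩
  · exact ⟨1, rfl, length_thePath_pos hne⟩

lemma anc_step {u v : T.V} (h : T.Anc u v) : T.Anc (T.step u v) v ∧ T.Anc u (T.step u v) :=
  anc_of_mem_path h step_mem_support

lemma step_eq_of_anc {u v w : T.V} (h1 : T.Anc u v) (h2 : T.Anc v w) (hne : u ≠ v) :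
    T.step u w = T.step u v := by
  rw [step, step, thePath_concat_of_anc h1 h2, Walk.getVert_append]
  by_cases hlt : 1 < (T.thePath u v).length
  · simp [hlt]
  · have hl : (T.thePath u v).length = 1 := by
      have := length_thePath_pos hne; omega
    rw [if_neg (by omega), hl]
    simp only [Nat.sub_self, Walk.getVert_zero]
    rw [← hl, Walk.getVert_length]

lemma step_ne_of_isLcaSet_pair {v a b : T.V} (h : T.IsLcaSet v {a, b}) (ha : a ≠ v)
    (hb : b ≠ v) : T.step v a ≠ T.step v b := by
  intro heq
  have hva : T.Anc v a := isLcaSet_pair_anc_left h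
  have hvb : T.Anc v b := isLcaSet_pair_anc_right h
  have hca : T.Anc (T.step v a) a := (anc_step hva).1
  have hcb : T.Anc (T.step v a) b := heq ▸ (anc_step hvb).1
  have hcv : T.Anc (T.step v a) v := by
    apply h.2
    intro w hw
    rcases hw with rfl | hw
    · exact hca
    · rw [Set.mem_singleton_iff] at hw; exact hw ▸ hcb
  have := anc_antisymm (anc_step hva).2 hcv
  exact step_ne (Ne.symm ha) this.symm

lemma isLcaSet_pair_of_step_ne {v a b : T.V} (hva : T.Anc v a) (hvb : T.Anc v b)
    (hs : T.step v a ≠ T.step v b) : T.IsLcaSet v {a, b} := by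
  constructor
  · intro w hw
    rcases hw with rfl | hw
    · exact hva
    · rw [Set.mem_singleton_iff] at hw; exact hw ▸ hvb
  · intro t ht
    have hta : T.Anc t a := ht a (by simp)
    have htb : T.Anc t b := ht b (by simp)
    rcases anc_comparable hta hva with h | h
    · exact h
    · by_cases hne : v = t
      · exact hne ▸ anc_refl v
      · exfalso
        apply hs
        rw [step_eq_of_anc h hta hne, step_eq_of_anc h htb hne]

end Step

end RootedTree
namespace RootedTree

variable {X : Type} {T : RootedTree X}

/-- lca of a nonempty set, chosen. -/
noncomputable def lcaS (T : RootedTree X) (S : Set T.V) (hS : S.Nonempty) : T.V :=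
  (exists_isLcaSet T hS).choose

lemma lcaS_spec (T : RootedTree X) (S : Set T.V) (hS : S.Nonempty) :
    T.IsLcaSet (T.lcaS S hS) S :=
  (exists_isLcaSet T hS).choose_spec

lemma anc_or_of_adj {a b : T.V} (h : T.G.Adj a b) : T.Anc a b ∨ T.Anc b a := by
  classical
  by_cases hb : b ∈ (T.thePath T.root a).support
  · exact Or.inr (anc_iff.mpr hb)
  · left
    have hq : ((T.thePath T.root a).append (Walk.cons h Walk.nil)).IsPath := by
      apply isPath_append (T.thePath_isPath _ _) (by simp [h.ne])
      intro x hx1 hx2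
      simp only [Walk.support_cons, Walk.support_nil, List.mem_cons,
        List.not_mem_nil, or_false, List.mem_singleton] at hx2
      rcases hx2 with rfl | rfl
      · rfl
      · exact absurd hx1 hb
    rw [anc_iff, ← thePath_eq _ hq, Walk.mem_support_append_iff]
    exact Or.inl (T.thePath T.root a).end_mem_support

end RootedTree

section EpsLemmas

open RootedTree

variable {X M : Type} {T : RootedTree X} {lam : Sym2 T.V → Option M}
  {eps : X → X → Option M}

/-- The lca of the pair of leaves of `x` and `y`. -/
noncomputable def lcaL (T : RootedTree X) (x y : X) : T.V :=
  T.lcaS {T.leaf x, T.leaf y} ⟨T.leaf x, by simp⟩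

lemma lcaL_spec (T : RootedTree X) (x y : X) :
    T.IsLcaSet (lcaL T x y) {T.leaf x, T.leaf y} :=
  T.lcaS_spec _ _

lemma pathHasLabel_iff {x y : X} {m : M} :
    PathHasLabel T lam x y m ↔
      ∃ e ∈ (T.thePath (lcaL T x y) (T.leaf y)).edges, lam e = some m := by
  constructor
  · rintro ⟨l, hl, p, hp, e, he, hm⟩
    have hleq : l = lcaL T x y := isLcaSet_unique hl (lcaL_spec T x y)
    subst hleq
    rw [thePath_eq p hp] at he
    exact ⟨e, he, hm⟩
  · rintro ⟨e, he, hm⟩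
    exact ⟨lcaL T x y, lcaL_spec T x y, T.thePath _ _, T.thePath_isPath _ _, e, he, hm⟩

variable (hexp : Explains T lam eps)
include hexp

lemma eps_some_iff {x y : X} (hxy : x ≠ y) {m : M} :
    eps x y = some m ↔
      ∃ e ∈ (T.thePath (lcaL T x y) (T.leaf y)).edges, lam e = some m := by
  rw [(hexp x y hxy).1 m, pathHasLabel_iff]

/-- Any two `M`-labels of in-arcs at the same vertex agree. -/
lemma in_arc_labels_eq {x x' y : X} (hxy : x ≠ y) (hx'y : x' ≠ y) {m m' : M}
    (h1 : eps x y = some m) (h2 : eps x' y = some m') : m = m' := by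
  obtain ⟨e1, he1, hm1⟩ := (eps_some_iff hexp hxy).mp h1
  obtain ⟨e2, he2, hm2⟩ := (eps_some_iff hexp hx'y).mp h2
  have ha1 : T.Anc (lcaL T x y) (T.leaf y) := isLcaSet_pair_anc_right (lcaL_spec T x y)
  have ha2 : T.Anc (lcaL T x' y) (T.leaf y) := isLcaSet_pair_anc_right (lcaL_spec T x' y)
  rcases anc_comparable ha1 ha2 with h | h
  · -- lca(x,y) above lca(x',y): e2 also lies on the longer path
    have : e2 ∈ (T.thePath (lcaL T x y) (T.leaf y)).edges := by
      rw [thePath_concat_of_anc h ha2, Walk.edges_append]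
      exact List.mem_append_right _ he2
    have := (eps_some_iff hexp hxy).mpr ⟨e2, this, hm2⟩
    rw [h1] at this
    exact Option.some_injective M this
  · have : e1 ∈ (T.thePath (lcaL T x' y) (T.leaf y)).edges := by
      rw [thePath_concat_of_anc h ha1, Walk.edges_append]
      exact List.mem_append_right _ he1
    have := (eps_some_iff hexp hx'y).mpr ⟨e1, this, hm1⟩
    rw [h2] at this
    exact (Option.some_injective M this).symm

lemma mem_Xset_of_eps_eq {x y : X} (hxy : x ≠ y) {m : M} (h : eps x y = some m) :
    y ∈ Xset eps (some m) := by
  refine ⟨x, hxy, h, ?_⟩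
  intro z' hz'x hz'y
  rcases heq : eps z' y with _ | m'
  · exact Or.inl rfl
  · exact Or.inr (congrArg some (in_arc_labels_eq hexp hz'y hxy heq h))

end EpsLemmas
section KeyLabel

open RootedTree

variable {X M : Type} {T : RootedTree X} {lam : Sym2 T.V → Option M}
  {eps : X → X → Option M} {m : M}

/-- The kept vertices: least common ancestors of pairs of `Y`-leaves. -/
def keptSet (T : RootedTree X) (Y : Set X) : Set T.V :=
  {v | ∃ y z : ↥Y, T.IsLcaSet v {T.leaf y.1, T.leaf z.1}}

variable (hexp : Explains T lam eps)
include hexp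

lemma label_eq_on_kept_path (hroot : ¬ T.IsLeaf T.root)
    {u v : T.V} (hu : u ∈ keptSet T (Xset eps (some m)))
    (hv : v ∈ keptSet T (Xset eps (some m)))
    (huv : T.Anc u v) (hne : u ≠ v) {m' : M} {e : Sym2 T.V}
    (he : e ∈ (T.thePath u v).edges) (hlab : lam e = some m') : m' = m := by
  obtain ⟨y', z', hu'⟩ := hu
  obtain ⟨a, b, hv'⟩ := hv
  have hnotleaf : ∀ w : X, T.leaf w ≠ u := by
    intro w hw
    apply hne
    have huv' : T.Anc (T.leaf w) v := by rw [hw]; exact huv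
    rw [← hw]
    exact (anc_leaf_eq hroot huv').symm
  have hay : T.Anc u (T.leaf y'.1) := isLcaSet_pair_anc_left hu'
  have haz : T.Anc u (T.leaf z'.1) := isLcaSet_pair_anc_right hu'
  have hstep : T.step u (T.leaf y'.1) ≠ T.step u (T.leaf z'.1) :=
    step_ne_of_isLcaSet_pair hu' (hnotleaf y'.1) (hnotleaf z'.1)
  obtain ⟨l', hlanc, hlstep⟩ :
      ∃ l' : ↥(Xset eps (some m)), T.Anc u (T.leaf l'.1) ∧
        T.step u (T.leaf l'.1) ≠ T.step u v := by
    by_cases hc : T.step u (T.leaf y'.1) = T.step u v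
    · exact ⟨z', haz, fun hc2 => hstep (hc.trans hc2.symm)⟩
    · exact ⟨y', hay, hc⟩
  have hvl : T.Anc v (T.leaf a.1) := isLcaSet_pair_anc_left hv'
  have hlca : T.IsLcaSet u {T.leaf l'.1, T.leaf a.1} := by
    apply isLcaSet_pair_of_step_ne hlanc (anc_trans hvl huv)
    rw [step_eq_of_anc huv hvl hne]
    exact hlstep
  have hne2 : l'.1 ≠ a.1 := by
    intro hEq
    rw [hEq, Set.pair_eq_singleton] at hlca
    exact hnotleaf a.1 (isLcaSet_unique (isLcaSet_singleton (T.leaf a.1)) hlca)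
  have hepsm' : eps l'.1 a.1 = some m' := by
    apply (eps_some_iff hexp hne2).mpr
    have hlcaeq : lcaL T l'.1 a.1 = u := isLcaSet_unique (lcaL_spec T l'.1 a.1) hlca
    rw [hlcaeq, thePath_concat_of_anc huv hvl, Walk.edges_append]
    exact ⟨e, List.mem_append_left _ he, hlab⟩
  obtain ⟨z, hz1, hz2, _⟩ := a.2
  exact in_arc_labels_eq hexp hne2 hz1 hepsm' hz2

lemma conj1_lemma (hroot : ¬ T.IsLeaf T.root)
    (T' : RootedTree ↥(Xset eps (some m))) (ι : T'.V → T.V)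
    (hres : IsRestriction T Subtype.val T' ι) :
    ∀ a b : T'.V, T'.G.Adj a b →
      ∀ p : T.G.Walk (ι a) (ι b), p.IsPath →
        ∀ m₁ m₂ : M, (∃ e ∈ p.edges, lam e = some m₁) →
          (∃ e ∈ p.edges, lam e = some m₂) → m₁ = m₂ := by
  intro a b hadj p hp m₁ m₂ h1 h2
  have hKa : ι a ∈ keptSet T (Xset eps (some m)) := (hres.image (ι a)).mp ⟨a, rfl⟩
  have hKb : ι b ∈ keptSet T (Xset eps (some m)) := (hres.image (ι b)).mp ⟨b, rfl⟩
  have hne : ι a ≠ ι b := fun h => hadj.ne (hres.inj h)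
  obtain ⟨e1, he1, hm1⟩ := h1
  obtain ⟨e2, he2, hm2⟩ := h2
  rcases anc_or_of_adj hadj with hanc | hanc
  · have hanc' : T.Anc (ι a) (ι b) := (hres.anc_iff a b).mp hanc
    rw [thePath_eq p hp] at he1 he2
    rw [label_eq_on_kept_path hexp hroot hKa hKb hanc' hne he1 hm1,
      label_eq_on_kept_path hexp hroot hKa hKb hanc' hne he2 hm2]
  · have hanc' : T.Anc (ι b) (ι a) := (hres.anc_iff b a).mp hanc
    have hrev : p.reverse = T.thePath (ι b) (ι a) := thePath_eq p.reverse hp.reverse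
    have he1' : e1 ∈ (T.thePath (ι b) (ι a)).edges := by
      rw [← hrev, Walk.edges_reverse, List.mem_reverse]; exact he1
    have he2' : e2 ∈ (T.thePath (ι b) (ι a)).edges := by
      rw [← hrev, Walk.edges_reverse, List.mem_reverse]; exact he2
    rw [label_eq_on_kept_path hexp hroot hKb hKa hanc' (Ne.symm hne) he1' hm1,
      label_eq_on_kept_path hexp hroot hKb hKa hanc' (Ne.symm hne) he2' hm2]

end KeyLabel
section Construction

open RootedTree

variable {X : Type}

lemma leaf_mem_keptSet (T : RootedTree X) {Y : Set X} (y : ↥Y) :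
    T.leaf y.1 ∈ keptSet T Y :=
  ⟨y, y, by rw [Set.pair_eq_singleton]; exact isLcaSet_singleton _⟩

lemma keptSet_nonempty (T : RootedTree X) {Y : Set X} (hY : Y.Nonempty) :
    (keptSet T Y).Nonempty := by
  obtain ⟨y, hy⟩ := hY
  exact ⟨T.leaf y, leaf_mem_keptSet T ⟨y, hy⟩⟩

variable (T : RootedTree X) (Y : Set X)

attribute [local instance] RootedTree.fintypeV

lemma exists_rootK (hK : (keptSet T Y).Nonempty) :
    ∃ r, r ∈ keptSet T Y ∧ ∀ v ∈ keptSet T Y, T.depth r ≤ T.depth v := by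
  classical
  obtain ⟨v₀, hv₀⟩ := hK
  have hne : (Finset.univ.filter (· ∈ keptSet T Y)).Nonempty :=
    ⟨v₀, by simp [hv₀]⟩
  obtain ⟨r, hr, hmin⟩ := Finset.exists_min_image _ T.depth hne
  rw [Finset.mem_filter] at hr
  exact ⟨r, hr.2, fun v hv => hmin v (by simp [hv])⟩

variable (hK : (keptSet T Y).Nonempty)

/-- The root of the restricted tree. -/
noncomputable def rootK : T.V := (exists_rootK T Y hK).choose

lemma rootK_mem : rootK T Y hK ∈ keptSet T Y := (exists_rootK T Y hK).choose_spec.1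

lemma rootK_min : ∀ v ∈ keptSet T Y, T.depth (rootK T Y hK) ≤ T.depth v :=
  (exists_rootK T Y hK).choose_spec.2

lemma rootK_anc_leaf (y : ↥Y) : T.Anc (rootK T Y hK) (T.leaf y.1) := by
  obtain ⟨y₀, z₀, hr⟩ := rootK_mem T Y hK
  have h1 : T.Anc (rootK T Y hK) (T.leaf y₀.1) := isLcaSet_pair_anc_left hr
  set w := lcaL T y₀.1 y.1 with hw
  have hwK : w ∈ keptSet T Y := ⟨y₀, y, lcaL_spec T _ _⟩
  have h2 : T.Anc w (T.leaf y₀.1) := isLcaSet_pair_anc_left (lcaL_spec T _ _)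
  have h3 : T.Anc w (T.leaf y.1) := isLcaSet_pair_anc_right (lcaL_spec T _ _)
  rcases anc_comparable h1 h2 with h | h
  · exact anc_trans h3 h
  · -- w is an ancestor of rootK; by minimality of depth they agree
    have hle := rootK_min T Y hK w hwK
    have : w = rootK T Y hK := by
      by_contra hne
      exact absurd (depth_lt_of_anc h hne) (by omega)
    exact this ▸ h3

lemma rootK_anc (v : T.V) (hv : v ∈ keptSet T Y) : T.Anc (rootK T Y hK) v := by
  obtain ⟨y, z, hv'⟩ := hv
  apply hv'.2
  intro w hw
  rcases hw with rfl | hw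
  · exact rootK_anc_leaf T Y hK y
  · rw [Set.mem_singleton_iff] at hw
    exact hw ▸ rootK_anc_leaf T Y hK z

lemma rootK_isLcaSet :
    T.IsLcaSet (rootK T Y hK) {v : T.V | ∃ y : ↥Y, v = T.leaf y.1} := by
  constructor
  · rintro v ⟨y, rfl⟩
    exact rootK_anc_leaf T Y hK y
  · intro u hu
    obtain ⟨y₀, z₀, hr⟩ := rootK_mem T Y hK
    apply hr.2
    intro w hw
    rcases hw with rfl | hw
    · exact hu _ ⟨y₀, rfl⟩
    · rw [Set.mem_singleton_iff] at hw
      exact hw ▸ hu _ ⟨z₀, rfl⟩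

lemma exists_parentK {v : T.V} (hv : v ∈ keptSet T Y) (hvr : v ≠ rootK T Y hK) :
    ∃ p, p ∈ keptSet T Y ∧ T.Anc p v ∧ p ≠ v ∧
      ∀ u ∈ keptSet T Y, T.Anc u v → u ≠ v → T.Anc u p := by
  classical
  have hne : (Finset.univ.filter
      (fun u => u ∈ keptSet T Y ∧ T.Anc u v ∧ u ≠ v)).Nonempty :=
    ⟨rootK T Y hK, by
      simp only [Finset.mem_filter, Finset.mem_univ, true_and]
      exact ⟨rootK_mem T Y hK, rootK_anc T Y hK v hv, Ne.symm hvr⟩⟩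
  obtain ⟨p, hp, hmax⟩ := Finset.exists_max_image _ T.depth hne
  rw [Finset.mem_filter] at hp
  obtain ⟨-, hpK, hpv, hpne⟩ := hp
  refine ⟨p, hpK, hpv, hpne, ?_⟩
  intro u huK huv hune
  rcases anc_comparable huv hpv with h | h
  · exact h
  · have h1 : T.depth u ≤ T.depth p := hmax u (by
      simp only [Finset.mem_filter, Finset.mem_univ, true_and]
      exact ⟨huK, huv, hune⟩)
    have : p = u := by
      by_contra hne2
      exact absurd (depth_lt_of_anc h hne2) (by omega)
    exact this ▸ anc_refl p

open Classical in
/-- Parent map on kept vertices. -/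
noncomputable def parentK (v : T.V) : T.V :=
  if h : v ∈ keptSet T Y ∧ v ≠ rootK T Y hK then
    (exists_parentK T Y hK h.1 h.2).choose
  else rootK T Y hK

lemma parentK_spec {v : T.V} (hv : v ∈ keptSet T Y) (hvr : v ≠ rootK T Y hK) :
    parentK T Y hK v ∈ keptSet T Y ∧ T.Anc (parentK T Y hK v) v ∧
      parentK T Y hK v ≠ v ∧
      ∀ u ∈ keptSet T Y, T.Anc u v → u ≠ v → T.Anc u (parentK T Y hK v) := by
  rw [parentK, dif_pos (⟨hv, hvr⟩ : _ ∧ _)]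
  exact (exists_parentK T Y hK hv hvr).choose_spec

/-- The graph of the restricted tree. -/
noncomputable def keptGraph : SimpleGraph ↥(keptSet T Y) where
  Adj a b := (a.1 ≠ rootK T Y hK ∧ parentK T Y hK a.1 = b.1) ∨
    (b.1 ≠ rootK T Y hK ∧ parentK T Y hK b.1 = a.1)
  symm := ⟨by intro a b h; tauto⟩
  loopless := ⟨by
    rintro a (⟨h1, h2⟩ | ⟨h1, h2⟩) <;>
      exact (parentK_spec T Y hK a.2 h1).2.2.1 h2⟩

lemma keptGraph_adj_parent {v : ↥(keptSet T Y)} (hv : v.1 ≠ rootK T Y hK) :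
    (keptGraph T Y hK).Adj v ⟨parentK T Y hK v.1, (parentK_spec T Y hK v.2 hv).1⟩ :=
  Or.inl ⟨hv, rfl⟩

/-- Every kept vertex has a path up to the root, along ancestors. -/
lemma exists_walk_rootK (hrK : rootK T Y hK ∈ keptSet T Y) (a : ↥(keptSet T Y)) :
    ∃ w : (keptGraph T Y hK).Walk a ⟨rootK T Y hK, hrK⟩,
      w.IsPath ∧ ∀ c ∈ w.support, T.Anc c.1 a.1 := by
  generalize hd : T.depth a.1 = d
  induction d using Nat.strong_induction_on generalizing a with
  | _ d ih =>
    by_cases har : a.1 = rootK T Y hK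
    · have : a = ⟨rootK T Y hK, hrK⟩ := Subtype.ext har
      subst this
      exact ⟨Walk.nil, Walk.IsPath.nil, by simp [anc_refl]⟩
    · obtain ⟨hpK, hpanc, hpne, -⟩ := parentK_spec T Y hK a.2 har
      set p : ↥(keptSet T Y) := ⟨parentK T Y hK a.1, hpK⟩ with hp
      obtain ⟨w', hw'path, hw'anc⟩ := ih (T.depth p.1)
        (hd ▸ depth_lt_of_anc hpanc hpne) p rfl
      refine ⟨Walk.cons (keptGraph_adj_parent T Y hK har) w', ?_, ?_⟩
      · rw [Walk.cons_isPath_iff]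
        refine ⟨hw'path, fun hmem => ?_⟩
        have := hw'anc a hmem
        exact hpne (anc_antisymm hpanc this)
        -- Anc p a and Anc a p gives p = a
      · intro c hc
        rw [Walk.support_cons, List.mem_cons] at hc
        rcases hc with rfl | hc
        · exact anc_refl _
        · exact anc_trans hpanc (hw'anc c hc)

lemma keptGraph_connected : (keptGraph T Y hK).Connected := by
  have hrK := rootK_mem T Y hK
  rw [SimpleGraph.connected_iff]
  constructor
  · intro a b
    obtain ⟨wa, -, -⟩ := exists_walk_rootK T Y hK hrK a
    obtain ⟨wb, -, -⟩ := exists_walk_rootK T Y hK hrK b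
    exact ⟨wa.append wb.reverse⟩
  · exact ⟨⟨rootK T Y hK, hrK⟩⟩

lemma keptGraph_isAcyclic : (keptGraph T Y hK).IsAcyclic := by
  classical
  intro v c hc
  obtain ⟨u, hu_mem, hu_max⟩ := Finset.exists_max_image c.support.toFinset
    (fun a => T.depth a.1) ⟨v, by simp⟩
  rw [List.mem_toFinset] at hu_mem
  have hu_max' : ∀ w ∈ c.support, T.depth w.1 ≤ T.depth u.1 := fun w hw =>
    hu_max w (List.mem_toFinset.mpr hw)
  set c' := c.rotate u hu_mem with hc'def
  have hc' : c'.IsCycle := hc.rotate hu_mem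
  have hsup : ∀ w ∈ c'.support, w ∈ c.support := by
    intro w hw
    rw [c'.support_eq_cons, List.mem_cons] at hw
    rcases hw with rfl | hw
    · exact hu_mem
    · have hperm := c.support_rotate u hu_mem
      have := (hperm.perm.mem_iff).mp hw
      rw [c.support_eq_cons]
      exact List.mem_cons_of_mem _ this
  -- a vertex of maximal depth on a cycle yields a contradiction
  cases hcc : c' with
  | nil => exact absurd (by rw [hcc] at hc'; exact hc') (by simp [Walk.IsCycle])
  | cons h q =>
    rw [hcc] at hc' hsup
    rename_i a
    -- first edge: u -- a
    have ha_sup : a ∈ (Walk.cons h q).support := by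
      rw [Walk.support_cons]
      exact List.mem_cons_of_mem _ q.start_mem_support
    have ha_depth : T.depth a.1 ≤ T.depth u.1 := hu_max' a (hsup a ha_sup)
    have hpar_a : parentK T Y hK u.1 = a.1 := by
      rcases h with ⟨h1, h2⟩ | ⟨h1, h2⟩
      · exact h2
      · exfalso
        obtain ⟨-, hanc, hne, -⟩ := parentK_spec T Y hK a.2 h1
        have := depth_lt_of_anc hanc hne
        rw [h2] at this
        omega
    -- last edge: b -- u
    have hqnil : ¬ q.Nil := Walk.not_nil_of_ne h.ne'
    have hdarts : q.darts ≠ [] := by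
      intro hnil
      apply hqnil
      rw [Walk.nil_iff_length_eq]
      have := congrArg List.length hnil
      rwa [q.length_darts] at this
    set d := q.darts.getLast hdarts with hd
    have hd_mem : d ∈ q.darts := List.getLast_mem hdarts
    have hd_snd : d.snd = u := by rw [hd, Walk.getLast_darts_eq_lastDart]; rfl
    have hb_sup : d.fst ∈ q.support := q.dart_fst_mem_support_of_mem_darts hd_mem
    have hb_depth : T.depth d.fst.1 ≤ T.depth u.1 := by
      apply hu_max' d.fst
      apply hsup
      rw [Walk.support_cons]
      exact List.mem_cons_of_mem _ hb_sup
    have hadj_bu : (keptGraph T Y hK).Adj d.fst u := hd_snd ▸ d.adj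
    have hpar_b : parentK T Y hK u.1 = d.fst.1 := by
      rcases hadj_bu with ⟨h1, h2⟩ | ⟨h1, h2⟩
      · exfalso
        obtain ⟨-, hanc, hne, -⟩ := parentK_spec T Y hK d.fst.2 h1
        have := depth_lt_of_anc hanc hne
        rw [h2] at this
        omega
      · exact h2
    have hab : a = d.fst := Subtype.ext (hpar_a ▸ hpar_b ▸ rfl)
    -- the first edge coincides with the last edge of the cycle
    have hedge : d.edge = s(u, a) := by
      rw [Sym2.eq_swap]
      have : d.edge = s(d.fst, d.snd) := rfl
      rw [this, hd_snd, hab]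
    have hmem_edge : s(u, a) ∈ q.edges := by
      rw [← hedge]
      exact List.mem_map_of_mem hd_mem
    have hnodup := hc'.edges_nodup
    rw [Walk.edges_cons] at hnodup
    exact (List.nodup_cons.mp hnodup).1 hmem_edge

end Construction
section Construction2

open RootedTree

variable {X : Type} (T : RootedTree X) (Y : Set X) (hK : (keptSet T Y).Nonempty)

attribute [local instance] RootedTree.fintypeV

lemma exists_childK {v d : T.V} (hv : v ∈ keptSet T Y) (hd : d ∈ keptSet T Y)
    (hvd : T.Anc v d) (hne : v ≠ d) :
    ∃ u, u ∈ keptSet T Y ∧ u ≠ rootK T Y hK ∧ parentK T Y hK u = v ∧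
      T.Anc v u ∧ T.Anc u d ∧ u ≠ v := by
  classical
  have hDne : (Finset.univ.filter
      (fun u => u ∈ keptSet T Y ∧ T.Anc v u ∧ u ≠ v ∧ T.Anc u d)).Nonempty :=
    ⟨d, by
      simp only [Finset.mem_filter, Finset.mem_univ, true_and]
      exact ⟨hd, hvd, Ne.symm hne, anc_refl d⟩⟩
  obtain ⟨u, hu, hmin⟩ := Finset.exists_min_image _ T.depth hDne
  rw [Finset.mem_filter] at hu
  obtain ⟨-, huK, hvu, hune, hud⟩ := hu
  have hur : u ≠ rootK T Y hK := by
    intro hEq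
    have h1 : T.Anc (rootK T Y hK) v := rootK_anc T Y hK v hv
    have h2 : v = rootK T Y hK := anc_antisymm (hEq ▸ hvu) h1
    exact hune (hEq.trans h2.symm)
  obtain ⟨hpK, hpanc, hpne, hpmax⟩ := parentK_spec T Y hK huK hur
  have hvp : T.Anc v (parentK T Y hK u) := hpmax v hv hvu (Ne.symm hune)
  have hpv : parentK T Y hK u = v := by
    by_contra hne2
    have hpD : parentK T Y hK u ∈ Finset.univ.filter
        (fun u' => u' ∈ keptSet T Y ∧ T.Anc v u' ∧ u' ≠ v ∧ T.Anc u' d) := by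
      simp only [Finset.mem_filter, Finset.mem_univ, true_and]
      exact ⟨hpK, hvp, hne2, anc_trans hud hpanc⟩
    have h1 := hmin _ hpD
    have h2 := depth_lt_of_anc hpanc hpne
    omega
  exact ⟨u, huK, hur, hpv, hvu, hud, hune⟩

lemma two_childrenK {v : ↥(keptSet T Y)} {a b : ↥Y}
    (hlca : T.IsLcaSet v.1 {T.leaf a.1, T.leaf b.1})
    (hla : T.leaf a.1 ≠ v.1) (hlb : T.leaf b.1 ≠ v.1) :
    ∃ ua ub : ↥(keptSet T Y), ua ≠ ub ∧
      (keptGraph T Y hK).Adj v ua ∧ (keptGraph T Y hK).Adj v ub ∧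
      T.Anc v.1 ua.1 ∧ ua.1 ≠ v.1 ∧ T.Anc v.1 ub.1 ∧ ub.1 ≠ v.1 := by
  have hstep : T.step v.1 (T.leaf a.1) ≠ T.step v.1 (T.leaf b.1) :=
    step_ne_of_isLcaSet_pair hlca hla hlb
  obtain ⟨ua, huaK, huar, huap, hvua, huala, huane⟩ :=
    exists_childK T Y hK v.2 (leaf_mem_keptSet T a) (isLcaSet_pair_anc_left hlca)
      (Ne.symm hla)
  obtain ⟨ub, hubK, hubr, hubp, hvub, hublb, hubne⟩ :=
    exists_childK T Y hK v.2 (leaf_mem_keptSet T b) (isLcaSet_pair_anc_right hlca)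
      (Ne.symm hlb)
  refine ⟨⟨ua, huaK⟩, ⟨ub, hubK⟩, ?_, Or.inr ⟨huar, huap⟩, Or.inr ⟨hubr, hubp⟩,
    hvua, huane, hvub, hubne⟩
  intro hEq
  apply hstep
  rw [step_eq_of_anc hvua huala (Ne.symm huane),
    step_eq_of_anc hvub hublb (Ne.symm hubne)]
  rw [Subtype.mk.injEq] at hEq
  rw [hEq]

lemma keptGraph_leaf_iff (hroot : ¬ T.IsLeaf T.root) (v : ↥(keptSet T Y)) :
    (∃ y : ↥Y, (⟨T.leaf y.1, leaf_mem_keptSet T y⟩ : ↥(keptSet T Y)) = v) ↔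
      ((keptGraph T Y hK).neighborSet v).ncard ≤ 1 := by
  constructor
  · rintro ⟨y, rfl⟩
    rw [Set.ncard_le_one_iff (Set.toFinite _)]
    intro c d hc hd
    rw [SimpleGraph.mem_neighborSet] at hc hd
    have hval : ∀ w : ↥(keptSet T Y),
        (keptGraph T Y hK).Adj ⟨T.leaf y.1, leaf_mem_keptSet T y⟩ w →
          w.1 = parentK T Y hK (T.leaf y.1) := by
      intro w hw
      rcases hw with ⟨-, h2⟩ | ⟨h1, h2⟩
      · exact h2.symm
      · exfalso
        obtain ⟨-, hanc, hne, -⟩ := parentK_spec T Y hK w.2 h1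
        rw [h2] at hanc hne
        exact hne (anc_leaf_eq hroot hanc).symm
    exact Subtype.ext ((hval c hc).trans (hval d hd).symm)
  · intro hle
    by_contra hne
    push_neg at hne
    obtain ⟨a, b, hlca⟩ := v.2
    have hla : T.leaf a.1 ≠ v.1 := fun h => hne a (Subtype.ext h)
    have hlb : T.leaf b.1 ≠ v.1 := fun h => hne b (Subtype.ext h)
    obtain ⟨ua, ub, huab, hadja, hadjb, -, -, -, -⟩ :=
      two_childrenK T Y hK hlca hla hlb
    have : 1 < ((keptGraph T Y hK).neighborSet v).ncard := by
      rw [Set.one_lt_ncard (Set.toFinite _)]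
      exact ⟨ua, hadja, ub, hadjb, huab⟩
    omega

/-- The restriction of `T` to the leaf set `Y`. -/
noncomputable def restTree (hroot : ¬ T.IsLeaf T.root) : RootedTree ↥Y where
  V := ↥(keptSet T Y)
  fintypeV := by classical exact Subtype.fintype _
  G := keptGraph T Y hK
  isTree := ⟨keptGraph_connected T Y hK, keptGraph_isAcyclic T Y hK⟩
  root := ⟨rootK T Y hK, rootK_mem T Y hK⟩
  leaf := fun y => ⟨T.leaf y.1, leaf_mem_keptSet T y⟩
  leaf_inj := fun y z h => Subtype.ext (T.leaf_inj (congrArg Subtype.val h))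
  leaf_iff := keptGraph_leaf_iff T Y hK hroot

variable (hroot : ¬ T.IsLeaf T.root)

lemma restTree_anc_iff (a b : (restTree T Y hK hroot).V) :
    (restTree T Y hK hroot).Anc a b ↔ T.Anc a.1 b.1 := by
  constructor
  · intro h
    obtain ⟨w, hwpath, hwanc⟩ :=
      exists_walk_rootK T Y hK (rootK_mem T Y hK) b
    have := h w.reverse hwpath.reverse
    erw [Walk.support_reverse, List.mem_reverse] at this
    exact hwanc a this
  · intro h
    generalize hd : T.depth b.1 = dep
    induction dep using Nat.strong_induction_on generalizing b with
    | _ dep ih =>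
      by_cases hab : a = b
      · exact hab ▸ anc_refl a
      · have hvals : a.1 ≠ b.1 := fun hv => hab (Subtype.ext hv)
        by_cases hbr : b.1 = rootK T Y hK
        · exfalso
          have h1 : T.Anc (rootK T Y hK) a.1 := rootK_anc T Y hK a.1 a.2
          exact hvals (anc_antisymm h (by rw [hbr]; exact h1))
        · obtain ⟨hpK, hpanc, hpne, hpmax⟩ := parentK_spec T Y hK b.2 hbr
          set pb : (restTree T Y hK hroot).V := ⟨parentK T Y hK b.1, hpK⟩ with hpb
          have hanc_apb : T.Anc a.1 pb.1 := hpmax a.1 a.2 h hvals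
          have ih' : (restTree T Y hK hroot).Anc a pb :=
            ih (T.depth pb.1) (hd ▸ depth_lt_of_anc hpanc hpne) pb hanc_apb rfl
          have hadj : (restTree T Y hK hroot).G.Adj pb b := Or.inr ⟨hbr, rfl⟩
          have hanc_pbb : (restTree T Y hK hroot).Anc pb b := by
            rcases anc_or_of_adj hadj with h' | h'
            · exact h'
            · exfalso
              obtain ⟨w, hwpath, hwanc⟩ :=
                exists_walk_rootK T Y hK (rootK_mem T Y hK) pb
              have := h' w.reverse hwpath.reverse
              erw [Walk.support_reverse, List.mem_reverse] at this
              have hanc_bpb : T.Anc b.1 pb.1 := hwanc b this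
              exact hpne (anc_antisymm hpanc hanc_bpb)
          exact anc_trans hanc_pbb ih'
  
lemma restTree_phylo (y0 z0 : ↥Y) (hyz : y0 ≠ z0) : (restTree T Y hK hroot).Phylo := by
  have hnl : ¬ (restTree T Y hK hroot).IsLeaf (restTree T Y hK hroot).root := by
    rintro ⟨y, hy⟩
    apply hyz
    have hyv : T.leaf y.1 = rootK T Y hK := congrArg Subtype.val hy
    have h1 : T.Anc (T.leaf y.1) (T.leaf y0.1) := by
      rw [hyv]; exact rootK_anc_leaf T Y hK y0
    have h2 : T.Anc (T.leaf y.1) (T.leaf z0.1) := by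
      rw [hyv]; exact rootK_anc_leaf T Y hK z0
    have e1 := anc_leaf_eq hroot h1
    have e2 := anc_leaf_eq hroot h2
    exact Subtype.ext (T.leaf_inj (e1.trans e2.symm))
  refine ⟨hnl, ?_, ?_⟩
  · -- degree of the root is at least 2
    obtain ⟨a, b, hr⟩ := rootK_mem T Y hK
    have hla : T.leaf a.1 ≠ (⟨rootK T Y hK, rootK_mem T Y hK⟩ : ↥(keptSet T Y)).1 :=
      fun h => hnl ⟨a, Subtype.ext h⟩
    have hlb : T.leaf b.1 ≠ (⟨rootK T Y hK, rootK_mem T Y hK⟩ : ↥(keptSet T Y)).1 :=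
      fun h => hnl ⟨b, Subtype.ext h⟩
    obtain ⟨ua, ub, huab, hadja, hadjb, -, -, -, -⟩ :=
      two_childrenK T Y hK (v := ⟨rootK T Y hK, rootK_mem T Y hK⟩) hr hla hlb
    have : 1 < ((keptGraph T Y hK).neighborSet ⟨rootK T Y hK, rootK_mem T Y hK⟩).ncard := by
      rw [Set.one_lt_ncard (Set.toFinite _)]
      exact ⟨ua, hadja, ub, hadjb, huab⟩
    exact this
  · intro v hvl hvr
    obtain ⟨a, b, hlca⟩ := v.2
    have hla : T.leaf a.1 ≠ v.1 := fun h => hvl ⟨a, Subtype.ext h⟩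
    have hlb : T.leaf b.1 ≠ v.1 := fun h => hvl ⟨b, Subtype.ext h⟩
    obtain ⟨ua, ub, huab, hadja, hadjb, hancua, huane, hancub, hubne⟩ :=
      two_childrenK T Y hK hlca hla hlb
    have hvrr : v.1 ≠ rootK T Y hK := fun h => hvr (Subtype.ext h)
    obtain ⟨hpK, hpanc, hpne, -⟩ := parentK_spec T Y hK v.2 hvrr
    set pv : ↥(keptSet T Y) := ⟨parentK T Y hK v.1, hpK⟩ with hpv
    have hadjp : (keptGraph T Y hK).Adj v pv := Or.inl ⟨hvrr, rfl⟩
    have hpua : pv ≠ ua := by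
      intro hEq
      have : T.Anc v.1 pv.1 := by rw [hEq]; exact hancua
      exact hpne (anc_antisymm hpanc this)
    have hpub : pv ≠ ub := by
      intro hEq
      have : T.Anc v.1 pv.1 := by rw [hEq]; exact hancub
      exact hpne (anc_antisymm hpanc this)
    have : 2 < ((keptGraph T Y hK).neighborSet v).ncard := by
      rw [Set.two_lt_ncard (Set.toFinite _)]
      exact ⟨pv, hadjp, ua, hadja, ub, hadjb, hpua, hpub, huab⟩
    exact this

end Construction2
section Labels

open RootedTree

variable {M : Type}

open Classical in
/-- Choose a label satisfying `P`, if any. -/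
noncomputable def chooseLabel (P : M → Prop) : Option M :=
  if h : ∃ mm, P mm then some h.choose else none

lemma chooseLabel_prop {P : M → Prop} {mm : M} (h : chooseLabel P = some mm) : P mm := by
  rw [chooseLabel] at h
  split at h
  · rename_i h'
    rw [Option.some.injEq] at h
    exact h ▸ h'.choose_spec
  · exact absurd h (by simp)

lemma chooseLabel_isSome {P : M → Prop} (h : ∃ mm, P mm) : ∃ mm, chooseLabel P = some mm := by
  rw [chooseLabel, dif_pos h]
  exact ⟨h.choose, rfl⟩

variable {X : Type} {T : RootedTree X}

lemma mem_edges_thePath_symm {u v : T.V} {e : Sym2 T.V} :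
    e ∈ (T.thePath u v).edges ↔ e ∈ (T.thePath v u).edges := by
  rw [← thePath_eq (T.thePath u v).reverse (T.thePath_isPath u v).reverse,
    Walk.edges_reverse, List.mem_reverse]

variable (T) (Y : Set X) (hK : (keptSet T Y).Nonempty)

/-- The induced labeling on the restricted tree. -/
noncomputable def lamK (lam : Sym2 T.V → Option M) :
    Sym2 (↥(keptSet T Y)) → Option M :=
  Sym2.lift ⟨fun a b => chooseLabel (fun mm => ∃ e ∈ (T.thePath a.1 b.1).edges, lam e = some mm),
    by
      intro a b
      apply congrArg chooseLabel
      funext mm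
      apply propext
      constructor
      · rintro ⟨e, he, hm⟩
        exact ⟨e, mem_edges_thePath_symm.mp he, hm⟩
      · rintro ⟨e, he, hm⟩
        exact ⟨e, mem_edges_thePath_symm.mp he, hm⟩⟩

variable {T Y}
variable {lam : Sym2 T.V → Option M}

lemma lamK_spec
    (huniq : ∀ a b : ↥(keptSet T Y), (keptGraph T Y hK).Adj a b →
      ∀ m₁ m₂ : M, (∃ e ∈ (T.thePath a.1 b.1).edges, lam e = some m₁) →
        (∃ e ∈ (T.thePath a.1 b.1).edges, lam e = some m₂) → m₁ = m₂)
    {a b : ↥(keptSet T Y)} (hadj : (keptGraph T Y hK).Adj a b) (mm : M) :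
    lamK T Y lam s(a, b) = some mm ↔
      ∃ e ∈ (T.thePath a.1 b.1).edges, lam e = some mm := by
  have hshow : lamK T Y lam s(a, b) =
      chooseLabel (fun mm => ∃ e ∈ (T.thePath a.1 b.1).edges, lam e = some mm) := by
    rw [lamK, Sym2.lift_mk]
  rw [hshow]
  constructor
  · intro h
    exact chooseLabel_prop
      (P := fun mm => ∃ e ∈ (T.thePath a.1 b.1).edges, lam e = some mm) h
  · intro h
    obtain ⟨mm₀, hmm₀⟩ := chooseLabel_isSome
      (P := fun mm => ∃ e ∈ (T.thePath a.1 b.1).edges, lam e = some mm) ⟨mm, h⟩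
    have hP := chooseLabel_prop hmm₀
    rw [hmm₀, huniq a b hadj mm₀ mm hP h]

end Labels
section Restriction

open RootedTree

variable {X M : Type} (T : RootedTree X) (Y : Set X) (hK : (keptSet T Y).Nonempty)
  (hroot : ¬ T.IsLeaf T.root)

attribute [local instance] RootedTree.fintypeV

lemma restTree_isRestriction :
    IsRestriction T Subtype.val (restTree T Y hK hroot) (fun a => a.1) :=
  { inj := fun a b h => Subtype.ext h
    leaf_map := fun _ => rfl
    anc_iff := fun a b => restTree_anc_iff T Y hK hroot a b
    image := fun v => ⟨fun ⟨a, ha⟩ => ha ▸ a.2, fun h => ⟨⟨v, h⟩, rfl⟩⟩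
    root_map := rootK_isLcaSet T Y hK }

variable {T Y}
variable {lam : Sym2 T.V → Option M}

lemma labels_on_restPath
    (hspec : ∀ (a b : ↥(keptSet T Y)), (keptGraph T Y hK).Adj a b → ∀ mm : M,
      (lamK T Y lam s(a, b) = some mm ↔ ∃ e ∈ (T.thePath a.1 b.1).edges, lam e = some mm))
    (a b : (restTree T Y hK hroot).V) (h : (restTree T Y hK hroot).Anc a b) (mm : M) :
    (∃ e ∈ ((restTree T Y hK hroot).thePath a b).edges, lamK T Y lam e = some mm) ↔
      ∃ e ∈ (T.thePath a.1 b.1).edges, lam e = some mm := by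
  generalize hd : T.depth b.1 = dep
  induction dep using Nat.strong_induction_on generalizing b with
  | _ dep ih =>
    by_cases hab : a = b
    · subst hab
      simp [thePath_self]
    · have hvals : a.1 ≠ b.1 := fun hv => hab (Subtype.ext hv)
      have hTanc : T.Anc a.1 b.1 := (restTree_anc_iff T Y hK hroot a b).mp h
      have hbr : b.1 ≠ rootK T Y hK := by
        intro hEq
        exact hvals (anc_antisymm hTanc (by rw [hEq]; exact rootK_anc T Y hK a.1 a.2))
      obtain ⟨hpK, hpanc, hpne, hpmax⟩ := parentK_spec T Y hK b.2 hbr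
      set pb : (restTree T Y hK hroot).V := ⟨parentK T Y hK b.1, hpK⟩ with hpbdef
      have hanc_apb : T.Anc a.1 pb.1 := hpmax a.1 a.2 hTanc hvals
      have hanc'_apb : (restTree T Y hK hroot).Anc a pb :=
        (restTree_anc_iff T Y hK hroot a pb).mpr hanc_apb
      have hanc'_pbb : (restTree T Y hK hroot).Anc pb b :=
        (restTree_anc_iff T Y hK hroot pb b).mpr hpanc
      have hadj : (restTree T Y hK hroot).G.Adj pb b := Or.inr ⟨hbr, rfl⟩
      have hpbb : pb ≠ b := fun hEq => hpne (congrArg Subtype.val hEq)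
      have hsingle : (restTree T Y hK hroot).thePath pb b = Walk.cons hadj Walk.nil :=
        (thePath_eq (Walk.cons hadj Walk.nil)
          (by rw [Walk.cons_isPath_iff]; exact ⟨Walk.IsPath.nil, by simp [hpbb]⟩)).symm
      have hsplitT' : (restTree T Y hK hroot).thePath a b =
          ((restTree T Y hK hroot).thePath a pb).append (Walk.cons hadj Walk.nil) := by
        rw [← hsingle]
        exact thePath_concat_of_anc hanc'_apb hanc'_pbb
      have hsplitT : T.thePath a.1 b.1 =
          (T.thePath a.1 pb.1).append (T.thePath pb.1 b.1) :=
        thePath_concat_of_anc hanc_apb hpanc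
      have ihres := ih (T.depth pb.1) (hd ▸ depth_lt_of_anc hpanc hpne) pb hanc'_apb rfl
      rw [hsplitT', hsplitT]
      constructor
      · rintro ⟨e, he, hm⟩
        rw [Walk.edges_append, List.mem_append] at he
        rcases he with he | he
        · obtain ⟨e', he', hm'⟩ := ihres.mp ⟨e, he, hm⟩
          exact ⟨e', by rw [Walk.edges_append, List.mem_append]; exact Or.inl he', hm'⟩
        · have heq : e = s(pb, b) := by simpa using he
          subst heq
          obtain ⟨e', he', hm'⟩ := (hspec pb b hadj mm).mp hm
          exact ⟨e', by rw [Walk.edges_append, List.mem_append]; exact Or.inr he', hm'⟩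
      · rintro ⟨e, he, hm⟩
        rw [Walk.edges_append, List.mem_append] at he
        rcases he with he | he
        · obtain ⟨e', he', hm'⟩ := ihres.mpr ⟨e, he, hm⟩
          exact ⟨e', by rw [Walk.edges_append, List.mem_append]; exact Or.inl he', hm'⟩
        · have hlam : lamK T Y lam s(pb, b) = some mm := (hspec pb b hadj mm).mpr ⟨e, he, hm⟩
          exact ⟨s(pb, b), by rw [Walk.edges_append, List.mem_append]; right; simp, hlam⟩

variable {eps : X → X → Option M}

lemma restTree_lca (y z : ↥Y) :
    (restTree T Y hK hroot).IsLcaSet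
      (⟨lcaL T y.1 z.1, ⟨y, z, lcaL_spec T y.1 z.1⟩⟩ : (restTree T Y hK hroot).V)
      {(restTree T Y hK hroot).leaf y, (restTree T Y hK hroot).leaf z} := by
  constructor
  · intro w hw
    rcases hw with rfl | hw
    · exact (restTree_anc_iff T Y hK hroot _ _).mpr
        (isLcaSet_pair_anc_left (lcaL_spec T y.1 z.1))
    · rw [Set.mem_singleton_iff] at hw
      subst hw
      exact (restTree_anc_iff T Y hK hroot _ _).mpr
        (isLcaSet_pair_anc_right (lcaL_spec T y.1 z.1))
  · intro u hu
    apply (restTree_anc_iff T Y hK hroot _ _).mpr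
    apply (lcaL_spec T y.1 z.1).2
    intro w hw
    rcases hw with rfl | hw
    · exact (restTree_anc_iff T Y hK hroot _ _).mp (hu _ (Or.inl rfl))
    · rw [Set.mem_singleton_iff] at hw
      subst hw
      exact (restTree_anc_iff T Y hK hroot _ _).mp
        (hu _ (Or.inr (Set.mem_singleton _)))

lemma restTree_pathHasLabel_iff
    (hspec : ∀ (a b : ↥(keptSet T Y)), (keptGraph T Y hK).Adj a b → ∀ mm : M,
      (lamK T Y lam s(a, b) = some mm ↔ ∃ e ∈ (T.thePath a.1 b.1).edges, lam e = some mm))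
    (hexp : Explains T lam eps) {y z : ↥Y} (hyz : y ≠ z) (mm : M) :
    PathHasLabel (restTree T Y hK hroot) (lamK T Y lam) y z mm ↔ eps y.1 z.1 = some mm := by
  have hvals : y.1 ≠ z.1 := fun h => hyz (Subtype.ext h)
  set l' : (restTree T Y hK hroot).V := ⟨lcaL T y.1 z.1, ⟨y, z, lcaL_spec T y.1 z.1⟩⟩
  rw [pathHasLabel_iff (T := restTree T Y hK hroot) (lam := lamK T Y lam)]
  have hlcaeq : lcaL (restTree T Y hK hroot) y z = l' :=
    isLcaSet_unique (lcaL_spec (restTree T Y hK hroot) y z) (restTree_lca hK hroot y z)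
  rw [hlcaeq]
  have hanc' : (restTree T Y hK hroot).Anc l' ((restTree T Y hK hroot).leaf z) :=
    (restTree_anc_iff T Y hK hroot _ _).mpr (isLcaSet_pair_anc_right (lcaL_spec T y.1 z.1))
  rw [labels_on_restPath hK hroot hspec l' _ hanc' mm, eps_some_iff hexp hvals]
  exact Iff.rfl

lemma restTree_explains
    (hspec : ∀ (a b : ↥(keptSet T Y)), (keptGraph T Y hK).Adj a b → ∀ mm : M,
      (lamK T Y lam s(a, b) = some mm ↔ ∃ e ∈ (T.thePath a.1 b.1).edges, lam e = some mm))
    (hexp : Explains T lam eps) :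
    Explains (restTree T Y hK hroot) (lamK T Y lam) (fun y z : ↥Y => eps y.1 z.1) := by
  intro y z hyz
  have key := fun mm => restTree_pathHasLabel_iff hK hroot hspec hexp hyz mm
  constructor
  · intro mm
    exact (key mm).symm
  · constructor
    · intro hnone mm hPath
      have hnone' : eps y.1 z.1 = none := hnone
      rw [(key mm).mp hPath] at hnone'
      exact Option.some_ne_none _ hnone'
    · intro hall
      rcases heq : eps y.1 z.1 with _ | mm
      · exact heq
      · exact absurd ((key mm).mpr heq) (hall mm)

end Restriction
section FitchFinal

open RootedTree

variable {X M : Type} {T : RootedTree X} {Y : Set X} {lam : Sym2 T.V → Option M}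
  {eps : X → X → Option M}

lemma restTree_fitchLabel (hK : (keptSet T Y).Nonempty) (hroot : ¬ T.IsLeaf T.root)
    (hspec : ∀ (a b : ↥(keptSet T Y)), (keptGraph T Y hK).Adj a b → ∀ mm : M,
      (lamK T Y lam s(a, b) = some mm ↔ ∃ e ∈ (T.thePath a.1 b.1).edges, lam e = some mm))
    (hexp : Explains T lam eps) (x y : ↥Y) (hxy : x ≠ y) :
    (eps x.1 y.1 ≠ none ↔
      PathHasLabel (restTree T Y hK hroot)
        (fun e => (lamK T Y lam e).map (fun _ => Unit.unit)) x y Unit.unit) := by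
  rw [pathHasLabel_iff]
  constructor
  · intro hne
    obtain ⟨mm, hmm⟩ := Option.ne_none_iff_exists'.mp hne
    have hP := (restTree_pathHasLabel_iff hK hroot hspec hexp hxy mm).mpr hmm
    rw [pathHasLabel_iff (T := restTree T Y hK hroot) (lam := lamK T Y lam)] at hP
    obtain ⟨e, he, hm⟩ := hP
    exact ⟨e, he, by rw [hm]; rfl⟩
  · rintro ⟨e, he, hu⟩
    rcases hl : lamK T Y lam e with _ | mm
    · rw [hl] at hu
      simp at hu
    · have hP : PathHasLabel (restTree T Y hK hroot) (lamK T Y lam) x y mm :=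
        pathHasLabel_iff.mpr ⟨e, he, hl⟩
      have := (restTree_pathHasLabel_iff hK hroot hspec hexp hxy mm).mp hP
      rw [this]
      simp

end FitchFinal

open RootedTree

theorem stmt5 {X M : Type} [Fintype X] [Fintype M] [Nonempty M]
    (hX : 1 < Fintype.card X)
    (eps : X → X → Option M)
    (hattain : ∀ m : M, ∃ x y : X, x ≠ y ∧ eps x y = some m)
    (T : RootedTree X) (lam : Sym2 T.V → Option M)
    (hphylo : T.Phylo) (hexp : Explains T lam eps) (m : M) :
    (∀ (T' : RootedTree (↥(Xset eps (some m)))) (ι : T'.V → T.V),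
        IsRestriction T Subtype.val T' ι →
        ∀ a b : T'.V, T'.G.Adj a b →
          ∀ p : T.G.Walk (ι a) (ι b), p.IsPath →
            ∀ m₁ m₂ : M, (∃ e ∈ p.edges, lam e = some m₁) →
              (∃ e ∈ p.edges, lam e = some m₂) → m₁ = m₂) ∧
    (∃ (T' : RootedTree (↥(Xset eps (some m)))) (ι : T'.V → T.V)
        (lam' : Sym2 T'.V → Option M),
        IsRestriction T Subtype.val T' ι ∧
        (∀ a b : T'.V, T'.G.Adj a b →
          ∀ p : T.G.Walk (ι a) (ι b), p.IsPath →
            ∀ mm : M, (lam' s(a, b) = some mm ↔ ∃ e ∈ p.edges, lam e = some mm)) ∧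
        Explains T' lam' (fun y z => eps y.1 z.1)) ∧
    IsFitchGraph (↥(Xset eps (some m))) (fun x y => eps x.1 y.1 ≠ none) := by
  classical
  have hroot : ¬ T.IsLeaf T.root := hphylo.1
  obtain ⟨x0, y0, hxy0, heps0⟩ := hattain m
  have hYne : (Xset eps (some m)).Nonempty := ⟨y0, mem_Xset_of_eps_eq hexp hxy0 heps0⟩
  have hK : (keptSet T (Xset eps (some m))).Nonempty := keptSet_nonempty T hYne
  have hconj1 : ∀ (T' : RootedTree (↥(Xset eps (some m)))) (ι : T'.V → T.V),
      IsRestriction T Subtype.val T' ι →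
      ∀ a b : T'.V, T'.G.Adj a b →
        ∀ p : T.G.Walk (ι a) (ι b), p.IsPath →
          ∀ m₁ m₂ : M, (∃ e ∈ p.edges, lam e = some m₁) →
            (∃ e ∈ p.edges, lam e = some m₂) → m₁ = m₂ :=
    fun T' ι hres => conj1_lemma hexp hroot T' ι hres
  have hres := restTree_isRestriction T (Xset eps (some m)) hK hroot
  have hspec : ∀ (a b : ↥(keptSet T (Xset eps (some m)))),
      (keptGraph T (Xset eps (some m)) hK).Adj a b → ∀ mm : M,
      (lamK T (Xset eps (some m)) lam s(a, b) = some mm ↔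
        ∃ e ∈ (T.thePath a.1 b.1).edges, lam e = some mm) := by
    intro a b hadj mm
    apply lamK_spec hK
    · intro a' b' hadj' m₁ m₂ h1 h2
      exact hconj1 (restTree T (Xset eps (some m)) hK hroot) (fun a => a.1) hres a' b'
        hadj' (T.thePath a'.1 b'.1) (T.thePath_isPath _ _) m₁ m₂ h1 h2
    · exact hadj
  refine ⟨hconj1, ?_, ?_⟩
  · refine ⟨restTree T (Xset eps (some m)) hK hroot, fun a => a.1,
      lamK T (Xset eps (some m)) lam, hres, ?_,
      restTree_explains hK hroot hspec hexp⟩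
    intro a b hadj p hp mm
    rw [thePath_eq p hp]
    exact hspec a b hadj mm
  · by_cases hsub : Subsingleton (↥(Xset eps (some m)))
    · exact Or.inl hsub
    · right
      rw [not_subsingleton_iff_nontrivial] at hsub
      obtain ⟨a, b, hab⟩ := hsub.exists_pair_ne
      exact ⟨restTree T (Xset eps (some m)) hK hroot,
        fun e => (lamK T (Xset eps (some m)) lam e).map (fun _ => Unit.unit),
        restTree_phylo T (Xset eps (some m)) hK hroot a b hab,
        fun x y hxy => restTree_fitchLabel hK hroot hspec hexp x y hxy⟩

end GenFitch
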